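/- Let 0 < γ < 1, 0 < α < 1 and n ≥ 1. Then |t_n| < (1−α)^γ γ^{−n} Γ(γ)^{−1} ∑_{l=1}^∞ l^{n+γ−1} α^l, where the series on the right (which equals the polylogarithm Li_{−n−γ+1}(α)) converges; here Γ is the Gamma function. -/

import Mathlib

/-- Pochhammer symbol `(γ)_l = γ(γ+1)⋯(γ+l−1)`. -/
noncomputable def poch (γ : ℝ) (l : ℕ) : ℝ := ∏ i ∈ Finset.range l, (γ + i)

/-- Stirling numbers of the second kind. -/
def stirling2 : ℕ → ℕ → ℕ
  | 0, 0 => 1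
  | 0, _+1 => 0
  | _+1, 0 => 0
  | n+1, k+1 => (k+1) * stirling2 n (k+1) + stirling2 n k

/-- `t_n(α,γ) = (−1)^n γ^{−n} ∑_{i=0}^n S(n,i) (γ)_i (α/(1−α))^i`. -/
noncomputable def tcoef (α γ : ℝ) (n : ℕ) : ℝ :=
  (-1)^n * (γ^n)⁻¹ *
    ∑ i ∈ Finset.range (n+1), (stirling2 n i : ℝ) * poch γ i * (α/(1-α))^i


open Finset Real Filter Topology


lemma poch_zero (γ : ℝ) : poch γ 0 = 1 := by simp [poch]

lemma poch_succ (γ : ℝ) (l : ℕ) : poch γ (l+1) = poch γ l * (γ + l) := by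
  simp [poch, Finset.prod_range_succ]

lemma poch_pos {γ : ℝ} (hγ : 0 < γ) (l : ℕ) : 0 < poch γ l :=
  Finset.prod_pos (fun i _ => by positivity)

lemma poch_add (γ : ℝ) (i m : ℕ) : poch γ (i + m) = poch γ i * poch (γ + i) m := by
  induction m with
  | zero => simp [poch_zero]
  | succ m ih =>
      rw [← add_assoc, poch_succ, ih, poch_succ]
      push_cast; ring

/-- descending factorial as a real product -/
noncomputable def desc (l i : ℕ) : ℝ := ∏ j ∈ Finset.range i, ((l:ℝ) - j)

lemma desc_zero (l : ℕ) : desc l 0 = 1 := by simp [desc]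

lemma desc_succ (l i : ℕ) : desc l (i+1) = desc l i * ((l:ℝ) - i) := by
  simp [desc, Finset.prod_range_succ]

lemma desc_eq_zero {l i : ℕ} (h : l < i) : desc l i = 0 :=
  Finset.prod_eq_zero (Finset.mem_range.2 h) (by simp)

lemma desc_succ' (m i : ℕ) : desc (m + i + 1) (i+1) = ((m:ℝ) + i + 1) * desc (m + i) i := by
  unfold desc
  rw [Finset.prod_range_succ']
  have : ∀ j : ℕ, ((m + i + 1 : ℕ) : ℝ) - (j + 1 : ℕ) = ((m + i : ℕ) : ℝ) - j := by
    intro j; push_cast; ring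
  rw [Finset.prod_congr rfl (fun j _ => this j)]
  push_cast; ring

lemma desc_mul_factorial (m i : ℕ) :
    desc (m + i) i * (m.factorial : ℝ) = ((m + i).factorial : ℝ) := by
  induction i with
  | zero => simp [desc_zero]
  | succ i ih =>
      have : m + (i+1) = (m + i) + 1 := by ring
      rw [this, desc_succ' m i]
      rw [mul_assoc, ih]
      rw [Nat.factorial_succ]
      push_cast; ring

lemma stirling2_eq_zero : ∀ {n k : ℕ}, n < k → stirling2 n k = 0 := by
  intro n
  induction n with
  | zero => intro k hk; cases k with
      | zero => omega
      | succ k => rfl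
  | succ n ih =>
      intro k hk
      cases k with
      | zero => omega
      | succ k =>
          show (k+1) * stirling2 n (k+1) + stirling2 n k = 0
          rw [ih (by omega), ih (by omega)]
          simp

lemma stirling_sum (n l : ℕ) :
    ((l:ℝ))^n = ∑ i ∈ Finset.range (n+1), (stirling2 n i : ℝ) * desc l i := by
  induction n with
  | zero => simp [stirling2, desc_zero]
  | succ n ih =>
      have key : ∀ i : ℕ, desc l (i+1) + (i:ℝ) * desc l i = (l:ℝ) * desc l i := by
        intro i; rw [desc_succ]; ring
      have h0 : (stirling2 (n+1) 0 : ℝ) * desc l 0 = 0 := by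
        show ((stirling2 (n+1) 0 : ℕ) : ℝ) * desc l 0 = 0
        simp [stirling2]
      rw [Finset.sum_range_succ' _ (n+1), h0, add_zero]
      have hrec : ∀ i : ℕ, (stirling2 (n+1) (i+1) : ℝ) = (i+1) * stirling2 n (i+1) + stirling2 n i := by
        intro i; show ((((i+1) * stirling2 n (i+1) + stirling2 n i : ℕ)) : ℝ) = _
        push_cast; ring
      calc ((l:ℝ))^(n+1) = (l:ℝ) * (l:ℝ)^n := by ring
      _ = ∑ i ∈ Finset.range (n+1), (stirling2 n i : ℝ) * ((l:ℝ) * desc l i) := by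
          rw [ih, Finset.mul_sum]; exact Finset.sum_congr rfl (fun i _ => by ring)
      _ = ∑ i ∈ Finset.range (n+1), ((stirling2 n i : ℝ) * desc l (i+1)
            + (i:ℝ) * stirling2 n i * desc l i) := by
          refine Finset.sum_congr rfl (fun i _ => ?_)
          rw [← key i]; ring
      _ = ∑ i ∈ Finset.range (n+1), (stirling2 n i : ℝ) * desc l (i+1)
            + ∑ i ∈ Finset.range (n+1), (i:ℝ) * stirling2 n i * desc l i := by
          rw [Finset.sum_add_distrib]
      _ = ∑ i ∈ Finset.range (n+1), (stirling2 n i : ℝ) * desc l (i+1)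
            + ∑ i ∈ Finset.range (n+1), ((i:ℝ)+1) * stirling2 n (i+1) * desc l (i+1) := by
          congr 1
          rw [Finset.sum_range_succ' (fun i => (i:ℝ) * stirling2 n i * desc l i) n,
              Finset.sum_range_succ (fun i => ((i:ℝ)+1) * stirling2 n (i+1) * desc l (i+1)) n,
              stirling2_eq_zero (by omega : n < n+1)]
          simp only [Nat.cast_zero, zero_mul, mul_zero, add_zero]
          exact Finset.sum_congr rfl (fun i _ => by push_cast; ring)
      _ = ∑ i ∈ Finset.range (n+1), (stirling2 (n+1) (i+1) : ℝ) * desc l (i+1) := by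
          rw [← Finset.sum_add_distrib]
          refine Finset.sum_congr rfl (fun i _ => ?_)
          rw [hrec i]; push_cast; ring

noncomputable def bc (a : ℝ) (m : ℕ) : ℝ := poch a m / m.factorial

lemma bc_zero (a : ℝ) : bc a 0 = 1 := by simp [bc, poch_zero]

lemma bc_pos {a : ℝ} (ha : 0 < a) (m : ℕ) : 0 < bc a m :=
  div_pos (poch_pos ha m) (by positivity)

lemma bc_succ (a : ℝ) (m : ℕ) : ((m:ℝ)+1) * bc a (m+1) = (a + m) * bc a m := by
  unfold bc
  rw [poch_succ, Nat.factorial_succ]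
  have h1 : (m.factorial : ℝ) ≠ 0 := by positivity
  field_simp
  push_cast; ring

/-- ratio-test summability for `bc a m * w m * r^m`-type series. -/
lemma summable_bc_pow {a r : ℝ} (ha : 0 < a) (hr0 : 0 ≤ r) (hr1 : r < 1) :
    Summable (fun m => bc a m * r^m) := by
  rcases eq_or_lt_of_le hr0 with rfl | hr0
  · apply summable_of_ne_finset_zero (s := {0})
    intro m hm
    have : m ≠ 0 := by simpa using hm
    rcases Nat.exists_eq_succ_of_ne_zero this with ⟨k, rfl⟩
    simp [pow_succ]
  · set ρ := (r + 1)/2 with hρ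
    have hρ1 : ρ < 1 := by rw [hρ]; linarith
    have hrρ : r < ρ := by rw [hρ]; linarith
    apply summable_of_ratio_norm_eventually_le hρ1
    rw [eventually_atTop]
    refine ⟨⌈(a * r)/(ρ - r)⌉₊, fun m hm => ?_⟩
    have hm' : (a * r)/(ρ - r) ≤ (m:ℝ) := le_trans (Nat.le_ceil _) (by exact_mod_cast hm)
    have hm2 : a * r ≤ (m:ℝ) * (ρ - r) := by
      rw [div_le_iff₀ (by linarith)] at hm'
      linarith
    have hterm : bc a (m+1) * r^(m+1) * ((m:ℝ)+1) ≤ ρ * (bc a m * r^m) * ((m:ℝ)+1) := by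
      have h1 : bc a (m+1) * r^(m+1) * ((m:ℝ)+1) = (a+m) * bc a m * r^m * r := by
        rw [show bc a (m+1) * r^(m+1) * ((m:ℝ)+1) = (((m:ℝ)+1) * bc a (m+1)) * (r^m * r) by ring,
            bc_succ]; ring
      rw [h1]
      have hb := (bc_pos ha m).le
      have : (a + m) * r ≤ ρ * ((m:ℝ)+1) := by nlinarith
      calc (a+m) * bc a m * r^m * r = ((a+m)*r) * (bc a m * r^m) := by ring
      _ ≤ (ρ * ((m:ℝ)+1)) * (bc a m * r^m) := by
          apply mul_le_mul_of_nonneg_right this (by positivity)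
      _ = ρ * (bc a m * r^m) * ((m:ℝ)+1) := by ring
    have hfin : bc a (m+1) * r^(m+1) ≤ ρ * (bc a m * r^m) :=
      le_of_mul_le_mul_right (by linarith [hterm]) (by positivity : (0:ℝ) < (m:ℝ)+1)
    rw [Real.norm_eq_abs, abs_of_nonneg (mul_nonneg (bc_pos ha _).le (by positivity)),
        Real.norm_eq_abs, abs_of_nonneg (mul_nonneg (bc_pos ha _).le (by positivity))]
    exact hfin

lemma summable_bc_deriv {a R : ℝ} (ha : 0 < a) (hR0 : 0 < R) (hR1 : R < 1) :
    Summable (fun m : ℕ => bc a m * ((m:ℝ) * R^(m-1))) := by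
  set ρ := (R + 1)/2 with hρ
  have hρ1 : ρ < 1 := by rw [hρ]; linarith
  have hRρ : R < ρ := by rw [hρ]; linarith
  apply summable_of_ratio_norm_eventually_le hρ1
  rw [eventually_atTop]
  refine ⟨⌈(a * R)/(ρ - R)⌉₊ + 1, fun m hm => ?_⟩
  have hm1 : 1 ≤ m := le_trans (by omega) hm
  have hm' : (a * R)/(ρ - R) ≤ (m:ℝ) := by
    have := Nat.le_ceil ((a * R)/(ρ - R))
    have h2 : (⌈(a * R)/(ρ - R)⌉₊ : ℝ) ≤ m := by exact_mod_cast le_trans (by omega) hm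
    linarith
  have hm2 : a * R ≤ (m:ℝ) * (ρ - R) := by
    rw [div_le_iff₀ (by linarith)] at hm'; linarith
  have e1 : bc a (m+1) * (((m:ℝ)+1) * R^(m+1-1)) = (a+m) * bc a m * R^(m-1) * R := by
    rw [show bc a (m+1) * (((m:ℝ)+1) * R^(m+1-1)) = (((m:ℝ)+1) * bc a (m+1)) * R^m by
          simp [Nat.add_sub_cancel]; ring,
        bc_succ]
    rcases Nat.exists_eq_succ_of_ne_zero (by omega : m ≠ 0) with ⟨k, rfl⟩
    simp [pow_succ, Nat.add_sub_cancel]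
    ring
  have hb := (bc_pos ha m).le
  have hkey : (a+m) * R ≤ ρ * m := by nlinarith [hm1, (by exact_mod_cast hm1 : (1:ℝ) ≤ (m:ℝ))]
  have hfin : bc a (m+1) * (((m:ℝ)+1) * R^(m+1-1)) ≤ ρ * (bc a m * ((m:ℝ) * R^(m-1))) := by
    rw [e1]
    calc (a+m) * bc a m * R^(m-1) * R = ((a+m)*R) * (bc a m * R^(m-1)) := by ring
    _ ≤ (ρ * m) * (bc a m * R^(m-1)) := mul_le_mul_of_nonneg_right hkey (by positivity)
    _ = ρ * (bc a m * ((m:ℝ) * R^(m-1))) := by ring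
  rw [Real.norm_eq_abs, abs_of_nonneg (mul_nonneg (bc_pos ha _).le (by positivity)),
      Real.norm_eq_abs, abs_of_nonneg (mul_nonneg (bc_pos ha _).le (by positivity))]
  exact_mod_cast hfin

theorem hasSum_binomial {a x : ℝ} (ha : 0 < a) (hx0 : 0 ≤ x) (hx1 : x < 1) :
    HasSum (fun m => bc a m * x ^ m) ((1 - x) ^ (-a)) := by
  set R := (x + 1)/2 with hR
  have hxR : x < R := by rw [hR]; linarith
  have hR1 : R < 1 := by rw [hR]; linarith
  have hR0 : 0 < R := by rw [hR]; linarith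
  set t := Set.Ioo (-R) R with ht
  have h0t : (0:ℝ) ∈ t := by constructor <;> simp [hR0] <;> linarith
  set u : ℕ → ℝ := fun m => bc a m * ((m:ℝ) * R^(m-1)) with hu_def
  have hu : Summable u := summable_bc_deriv ha hR0 hR1
  set g : ℕ → ℝ → ℝ := fun m y => bc a m * y^m with hg_def
  set g' : ℕ → ℝ → ℝ := fun m y => bc a m * ((m:ℝ) * y^(m-1)) with hg'_def
  have hg : ∀ m y, HasDerivAt (g m) (g' m y) y := fun m y => (hasDerivAt_pow m y).const_mul _
  have hg' : ∀ m y, y ∈ t → ‖g' m y‖ ≤ u m := by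
    intro m y hy
    have hyR : |y| ≤ R := by
      rw [abs_le]; exact ⟨hy.1.le, hy.2.le⟩
    have : ‖g' m y‖ = bc a m * ((m:ℝ) * |y|^(m-1)) := by
      rw [hg'_def]; simp only [Real.norm_eq_abs, abs_mul, abs_pow,
        abs_of_nonneg (bc_pos ha m).le, abs_of_nonneg (Nat.cast_nonneg m : (0:ℝ) ≤ m)]
    rw [this, hu_def]
    have := pow_le_pow_left₀ (abs_nonneg y) hyR (m-1)
    have hb := (bc_pos ha m).le
    have hm : (0:ℝ) ≤ (m:ℝ) := Nat.cast_nonneg m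
    exact mul_le_mul_of_nonneg_left (mul_le_mul_of_nonneg_left this hm) hb
  have hsum0 : Summable (fun m => g m 0) := summable_bc_pow ha le_rfl one_pos
  have hsummable : ∀ y : ℝ, |y| < 1 → Summable (fun m => bc a m * y^m) := by
    intro y hy
    apply Summable.of_norm
    have heq : (fun m => ‖bc a m * y^m‖) = fun m => bc a m * |y|^m := by
      funext m
      rw [Real.norm_eq_abs, abs_mul, abs_pow, abs_of_nonneg (bc_pos ha m).le]
    rw [heq]
    exact summable_bc_pow ha (abs_nonneg y) hy
  set f : ℝ → ℝ := fun z => ∑' m, g m z with hf_def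
  set D : ℝ → ℝ := fun y => ∑' m, g' m y with hD_def
  have hderiv : ∀ y ∈ t, HasDerivAt f (D y) y := fun y hy =>
    hasDerivAt_tsum_of_isPreconnected hu isOpen_Ioo isPreconnected_Ioo
      (fun m z _ => hg m z) hg' h0t hsum0 hy
  have hfD : ∀ y ∈ t, HasSum (fun m => g' m y) (D y) := fun y hy =>
    (Summable.of_norm_bounded hu (fun m => hg' m y hy)).hasSum
  have hfS : ∀ y ∈ t, HasSum (fun m => g m y) (f y) := by
    intro y hy
    have hy1 : |y| < 1 := lt_of_lt_of_le (abs_lt.2 ⟨hy.1, hy.2⟩) hR1.le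
    exact (hsummable y hy1).hasSum
  have hode : ∀ y ∈ t, (1 - y) * D y = a * f y := by
    intro y hy
    have h1 : HasSum (fun m => g' (m+1) y) (D y - ∑ i ∈ Finset.range 1, g' i y) :=
      (hasSum_nat_add_iff' 1).2 (hfD y hy)
    have h1' : HasSum (fun m => g' (m+1) y) (D y) := by
      simpa [hg'_def] using h1
    have h2 : HasSum (fun m => (a + m) * (bc a m * y^m)) (D y) := by
      have he : (fun m : ℕ => g' (m+1) y) = fun m => (a + m) * (bc a m * y^m) := by
        funext m
        show bc a (m+1) * (((m+1:ℕ):ℝ) * y^(m+1-1)) = (a + (m:ℝ)) * (bc a m * y^m)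
        have : ((m+1:ℕ):ℝ) = (m:ℝ) + 1 := by push_cast; ring
        rw [Nat.add_sub_cancel, this,
            show bc a (m+1) * (((m:ℝ)+1) * y^m) = (((m:ℝ)+1) * bc a (m+1)) * y^m by ring,
            bc_succ]
        ring
      rw [← he]
      exact h1'
    have h3 : HasSum (fun m : ℕ => (m:ℝ) * (bc a m * y^m)) (y * D y) := by
      have := (hfD y hy).mul_left y
      have he : (fun m : ℕ => y * g' m y) = fun m : ℕ => (m:ℝ) * (bc a m * y^m) := by
        funext m
        show y * (bc a m * ((m:ℝ) * y^(m-1))) = (m:ℝ) * (bc a m * y^m)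
        cases m with
        | zero => simp
        | succ k =>
            rw [Nat.add_sub_cancel, show y * (bc a (k+1) * (((k+1:ℕ):ℝ) * y^k))
                = ((k+1:ℕ):ℝ) * (bc a (k+1) * (y^k * y)) by ring, ← pow_succ]
      rw [← he]
      exact this
    have h4 : HasSum (fun m => a * (bc a m * y^m)) (D y - y * D y) := by
      have := h2.sub h3
      have he : (fun m : ℕ => (a + m) * (bc a m * y^m) - (m:ℝ) * (bc a m * y^m))
          = fun m => a * (bc a m * y^m) := by
        funext m; ring
      rw [← he]
      exact this
    have h5 : HasSum (fun m => a * (bc a m * y^m)) (a * f y) := (hfS y hy).mul_left a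
    have := h4.unique h5
    linarith [this]
  -- the function (1-y)^a * f y is constant on [0,x]
  set F : ℝ → ℝ := fun y => (1-y)^a * f y with hF_def
  have hsub : Set.Icc (0:ℝ) x ⊆ t := by
    intro y hy
    exact ⟨lt_of_lt_of_le (by linarith) hy.1, lt_of_le_of_lt hy.2 hxR⟩
  have hF : ∀ y ∈ Set.Icc (0:ℝ) x, HasDerivAt F 0 y := by
    intro y hy
    have hyt : y ∈ t := hsub hy
    have h1y : 0 < 1 - y := by
      have := hy.2; have := hyt.2; linarith [hxR, hR1]
    have hi : HasDerivAt (fun z : ℝ => 1 - z) (-1) y := (hasDerivAt_id y).const_sub 1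
    have ho : HasDerivAt (fun z : ℝ => z ^ a) (a * (1-y) ^ (a-1)) (1-y) :=
      Real.hasDerivAt_rpow_const (Or.inl (ne_of_gt h1y))
    have hrp : HasDerivAt (fun z : ℝ => (1-z) ^ a) (a * (1-y) ^ (a-1) * (-1)) y :=
      HasDerivAt.comp y ho hi
    have hmul := hrp.mul (hderiv y hyt)
    have hz : a * (1-y) ^ (a-1) * (-1) * f y + (1-y)^a * D y = 0 := by
      have hsplit : (1-y)^a = (1-y)^(a-1) * (1-y) := by
        have := Real.rpow_add_one (ne_of_gt h1y) (a-1)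
        rwa [sub_add_cancel] at this
      rw [hsplit]
      have hode' := hode y hyt
      calc a * (1-y) ^ (a-1) * (-1) * f y + (1-y)^(a-1) * (1-y) * D y
          = (1-y)^(a-1) * ((1 - y) * D y - a * f y) := by ring
      _ = 0 := by rw [hode']; ring
    rw [hF_def]
    have := hmul
    rw [hz] at this
    exact this
  have hconst := constant_of_has_deriv_right_zero
    (f := F) (a := 0) (b := x)
    (fun y hy => (hF y hy).continuousAt.continuousWithinAt)
    (fun y hy => ((hF y (Set.Ico_subset_Icc_self hy)).hasDerivWithinAt))
  have hFx : F x = F 0 := hconst x (Set.right_mem_Icc.2 hx0)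
  have hf0 : f 0 = 1 := by
    have h1 : ∑' m, g m 0 = g 0 0 := tsum_eq_single 0 (by
      intro m hm
      rcases Nat.exists_eq_succ_of_ne_zero hm with ⟨k, rfl⟩
      show bc a (k+1) * (0:ℝ)^(k+1) = 0
      simp)
    show (∑' m, g m 0) = 1
    rw [h1]
    show bc a 0 * (0:ℝ)^0 = 1
    simp [bc_zero]
  have hF0 : F 0 = 1 := by
    rw [hF_def]
    show (1 - 0:ℝ)^a * f 0 = 1
    rw [hf0, sub_zero, Real.one_rpow, mul_one]
  have h1x : 0 < 1 - x := by linarith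
  have hfx : f x = (1-x)^(-a) := by
    have hFx' : (1-x)^a * f x = 1 := hFx.trans hF0
    have hpos : (0:ℝ) < (1-x)^a := Real.rpow_pos_of_pos h1x a
    rw [Real.rpow_neg h1x.le]
    field_simp at hFx' ⊢
    linarith [hFx']
  have hxt : x ∈ t := ⟨by linarith, hxR⟩
  have := hfS x hxt
  rw [hfx] at this
  exact this

lemma Gamma_poch {γ : ℝ} (hγ : 0 < γ) (l : ℕ) :
    Real.Gamma (γ + l) = poch γ l * Real.Gamma γ := by
  induction l with
  | zero => simp [poch_zero]
  | succ l ih =>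
      have h1 : γ + ((l:ℝ) + 1) = (γ + l) + 1 := by ring
      have h2 : γ + (l:ℝ) ≠ 0 := by positivity
      push_cast
      rw [h1, Real.Gamma_add_one h2, ih, poch_succ]
      ring

lemma gautschi {γ : ℝ} (hγ0 : 0 < γ) (hγ1 : γ < 1) (k : ℕ) :
    Real.Gamma (γ + (k+1:ℕ)) ≤ ((k+1:ℕ):ℝ)^(γ-1) * ((k+1:ℕ).factorial : ℝ) := by
  set l : ℝ := ((k+1:ℕ):ℝ) with hl
  have hlpos : 0 < l := by rw [hl]; positivity
  have hx : (l:ℝ) ∈ Set.Ioi (0:ℝ) := hlpos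
  have hy : l + 1 ∈ Set.Ioi (0:ℝ) := by simp; linarith
  have hconv := Real.convexOn_log_Gamma.2 hx hy (by linarith : (0:ℝ) ≤ 1 - γ)
    hγ0.le (by ring)
  have hcomb : (1-γ) • l + γ • (l + 1) = γ + l := by
    simp only [smul_eq_mul]; ring
  rw [hcomb] at hconv
  simp only [smul_eq_mul, Function.comp_apply] at hconv
  -- exponentiate
  have hΓl : 0 < Real.Gamma l := Real.Gamma_pos_of_pos hlpos
  have hΓl1 : 0 < Real.Gamma (l+1) := Real.Gamma_pos_of_pos (by linarith)
  have hΓγl : 0 < Real.Gamma (γ + l) := Real.Gamma_pos_of_pos (by linarith)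
  have hexp : Real.Gamma (γ + l) ≤ (Real.Gamma l)^(1-γ) * (Real.Gamma (l+1))^γ := by
    have := Real.exp_le_exp.2 hconv
    rw [Real.exp_log hΓγl, Real.exp_add] at this
    rw [Real.rpow_def_of_pos hΓl, Real.rpow_def_of_pos hΓl1]
    calc Real.Gamma (γ + l) ≤ Real.exp ((1-γ) * Real.log (Real.Gamma l))
        * Real.exp (γ * Real.log (Real.Gamma (l+1))) := this
    _ = Real.exp (Real.log (Real.Gamma l) * (1-γ)) * Real.exp (Real.log (Real.Gamma (l+1)) * γ) := by
        rw [mul_comm (1-γ), mul_comm γ]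
  -- identify Gamma values with factorials
  have hGl : Real.Gamma l = (k.factorial : ℝ) := by
    rw [hl]; push_cast; exact Real.Gamma_nat_eq_factorial k
  have hGl1 : Real.Gamma (l+1) = ((k+1).factorial : ℝ) := by
    have := Real.Gamma_nat_eq_factorial (k+1)
    rw [hl]
    push_cast at this ⊢
    linarith [this]
  rw [hGl, hGl1] at hexp
  refine le_trans hexp (le_of_eq ?_)
  -- (k!)^(1-γ) * ((k+1)!)^γ = l^(γ-1) * (k+1)!
  have hB : ((k+1).factorial : ℝ) = l * (k.factorial : ℝ) := by
    rw [hl, Nat.factorial_succ]; push_cast; ring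
  have hkf : (0:ℝ) < (k.factorial : ℝ) := by positivity
  have hA : (k.factorial : ℝ) = ((k+1).factorial : ℝ) * l⁻¹ := by
    rw [hB]; field_simp
  rw [hA, Real.mul_rpow (by positivity) (by positivity), Real.inv_rpow hlpos.le,
      ← Real.rpow_neg hlpos.le]
  have h1 : -(1-γ) = γ - 1 := by ring
  rw [h1]
  rw [show ((k+1).factorial:ℝ)^(1-γ) * l^(γ-1) * ((k+1).factorial:ℝ)^γ
      = l^(γ-1) * (((k+1).factorial:ℝ)^(1-γ) * ((k+1).factorial:ℝ)^γ) by ring,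
    ← Real.rpow_add (by positivity)]
  norm_num

lemma Gamma_add_one_lt_one {γ : ℝ} (hγ0 : 0 < γ) (hγ1 : γ < 1) :
    Real.Gamma (γ + 1) < 1 := by
  have h1 := gautschi hγ0 hγ1 0
  have h2 := gautschi hγ0 hγ1 1
  norm_num at h1
  -- h1 : Gamma (γ + 1) ≤ 1
  rcases lt_or_eq_of_le h1 with h | h
  · exact h
  · exfalso
    have hΓ2 : Real.Gamma (γ + 2) = γ + 1 := by
      have : γ + 2 = (γ + 1) + 1 := by ring
      rw [this, Real.Gamma_add_one (by positivity), h, mul_one]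
    have hbound : Real.Gamma (γ + 2) ≤ (2:ℝ)^(γ-1) * 2 := by
      have := h2
      norm_num at this
      convert this using 2 <;> norm_num
    have h2γ : (2:ℝ)^(γ-1) * 2 = (2:ℝ)^γ := by
      rw [← Real.rpow_add_one (by norm_num : (2:ℝ) ≠ 0) (γ-1)]
      norm_num
    rw [hΓ2, h2γ] at hbound
    have hbern : (2:ℝ)^γ < 1 + γ := by
      have := rpow_one_add_lt_one_add_mul_self (s := 1) (by norm_num) (by norm_num) hγ0 hγ1
      norm_num at this
      convert this using 2 <;> norm_num
    linarith


lemma desc_mul_factorial' (i m : ℕ) :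
    desc (i + m) i * (m.factorial : ℝ) = ((i + m).factorial : ℝ) := by
  rw [add_comm i m]; exact desc_mul_factorial m i

lemma desc_div_factorial (i m : ℕ) :
    desc (i + m) i / ((i + m).factorial : ℝ) = 1 / (m.factorial : ℝ) := by
  rw [div_eq_div_iff (by positivity) (by positivity), one_mul]
  exact desc_mul_factorial' i m

/-- For `0 < γ < 1`, `0 < α < 1`, `n ≥ 1`:
`|t_n| < (1−α)^γ γ^{−n} Γ(γ)^{−1} ∑_{l≥1} l^{n+γ−1} α^l`, the series (the polylogarithm
`Li_{−n−γ+1}(α)`) being convergent. -/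
theorem tcoef_upper_bound (α γ : ℝ) (hγ0 : 0 < γ) (hγ1 : γ < 1)
    (hα0 : 0 < α) (hα1 : α < 1) (n : ℕ) (hn : 1 ≤ n) :
    Summable (fun l : ℕ => (l : ℝ) ^ ((n : ℝ) + γ - 1) * α^l) ∧
    |tcoef α γ n| < (1 - α) ^ γ * (γ^n)⁻¹ * (Real.Gamma γ)⁻¹ *
      ∑' l : ℕ, (l : ℝ) ^ ((n : ℝ) + γ - 1) * α^l := by
  have h1α : 0 < 1 - α := by linarith
  have hΓ : 0 < Real.Gamma γ := Real.Gamma_pos_of_pos hγ0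
  have hn1 : (1:ℝ) ≤ (n:ℝ) := by exact_mod_cast hn
  have hexp_pos : 0 < (n:ℝ) + γ - 1 := by linarith
  set g : ℕ → ℝ := fun l => (l:ℝ) ^ ((n:ℝ) + γ - 1) * α^l with hg_def
  -- summability of the RHS series
  have hsumg : Summable g := by
    have hmaj : Summable (fun l : ℕ => (l:ℝ)^n * α^l) :=
      summable_pow_mul_geometric_of_norm_lt_one n
        (by rw [Real.norm_eq_abs, abs_of_pos hα0]; exact hα1)
    refine Summable.of_nonneg_of_le (fun l => by positivity) (fun l => ?_) hmaj
    cases l with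
    | zero =>
        have hg0 : g 0 = 0 := by
          show ((0:ℕ):ℝ) ^ ((n:ℝ) + γ - 1) * α^0 = 0
          rw [Nat.cast_zero, Real.zero_rpow hexp_pos.ne']
          ring
        rw [hg0]
        positivity
    | succ k =>
        have hl1 : (1:ℝ) ≤ ((k+1:ℕ):ℝ) := by exact_mod_cast Nat.one_le_iff_ne_zero.2 (by omega)
        have h1 : ((k+1:ℕ):ℝ) ^ ((n:ℝ) + γ - 1) ≤ ((k+1:ℕ):ℝ) ^ (n:ℝ) :=
          Real.rpow_le_rpow_of_exponent_le hl1 (by linarith)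
        have h2 : ((k+1:ℕ):ℝ) ^ (n:ℝ) = ((k+1:ℕ):ℝ) ^ n := Real.rpow_natCast _ n
        calc ((k+1:ℕ):ℝ) ^ ((n:ℝ) + γ - 1) * α^(k+1)
            ≤ ((k+1:ℕ):ℝ) ^ (n:ℝ) * α^(k+1) := by
              apply mul_le_mul_of_nonneg_right h1 (by positivity)
        _ = ((k+1:ℕ):ℝ) ^ n * α^(k+1) := by rw [h2]
  -- Gautschi in ratio form
  have hGau : ∀ l : ℕ, 1 ≤ l → poch γ l / (l.factorial : ℝ) ≤ (l:ℝ)^(γ-1) / Real.Gamma γ := by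
    intro l hl
    rcases Nat.exists_eq_succ_of_ne_zero (by omega : l ≠ 0) with ⟨k, rfl⟩
    have h1 := gautschi hγ0 hγ1 k
    rw [Gamma_poch hγ0 (k+1)] at h1
    rw [div_le_div_iff₀ (by positivity) hΓ]
    calc poch γ (k+1) * Real.Gamma γ ≤ ((k+1:ℕ):ℝ)^(γ-1) * ((k+1:ℕ).factorial : ℝ) := h1
    _ = ((k+1:ℕ):ℝ)^(γ-1) * ((k+1:ℕ).factorial : ℝ) := rfl
  -- strict inequality at l = 1
  have hγΓ : γ * Real.Gamma γ < 1 := by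
    have := Gamma_add_one_lt_one hγ0 hγ1
    rwa [Real.Gamma_add_one (ne_of_gt hγ0)] at this
  -- the comparison functions
  set F : ℕ → ℝ := fun l => poch γ l * (l:ℝ)^n * α^l / (l.factorial : ℝ) with hF_def
  have hFG : ∀ l, F l ≤ (Real.Gamma γ)⁻¹ * g l := by
    intro l
    cases l with
    | zero =>
        have hF0 : F 0 = 0 := by
          show poch γ 0 * ((0:ℕ):ℝ)^n * α^0 / _ = 0
          rw [Nat.cast_zero, zero_pow (show n ≠ 0 by omega)]
          ring
        have hg0 : g 0 = 0 := by
          show ((0:ℕ):ℝ) ^ ((n:ℝ) + γ - 1) * α^0 = 0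
          rw [Nat.cast_zero, Real.zero_rpow hexp_pos.ne']
          ring
        rw [hF0, hg0, mul_zero]
    | succ k =>
        have hl1 : (1:ℕ) ≤ k+1 := by omega
        have hlr : (0:ℝ) < ((k+1:ℕ):ℝ) := by positivity
        have h1 := hGau (k+1) hl1
        have h2 : ((k+1:ℕ):ℝ)^(γ-1) * ((k+1:ℕ):ℝ)^n = ((k+1:ℕ):ℝ) ^ ((n:ℝ) + γ - 1) := by
          rw [← Real.rpow_natCast ((k+1:ℕ):ℝ) n, ← Real.rpow_add hlr]
          congr 1; ring
        have hterm : (0:ℝ) ≤ ((k+1:ℕ):ℝ)^n * α^(k+1) := by positivity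
        calc F (k+1) = (poch γ (k+1) / ((k+1:ℕ).factorial : ℝ)) * (((k+1:ℕ):ℝ)^n * α^(k+1)) := by
              rw [hF_def]; push_cast; ring
        _ ≤ (((k+1:ℕ):ℝ)^(γ-1) / Real.Gamma γ) * (((k+1:ℕ):ℝ)^n * α^(k+1)) :=
              mul_le_mul_of_nonneg_right h1 hterm
        _ = (Real.Gamma γ)⁻¹ * g (k+1) := by
              rw [hg_def]
              show _ = (Real.Gamma γ)⁻¹ * (((k+1:ℕ):ℝ) ^ ((n:ℝ) + γ - 1) * α^(k+1))
              rw [← h2]; field_simp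
  have hFG1 : F 1 < (Real.Gamma γ)⁻¹ * g 1 := by
    have hF1 : F 1 = γ * α := by
      rw [hF_def]
      show poch γ 1 * ((1:ℕ):ℝ)^n * α^1 / ((Nat.factorial 1 : ℕ):ℝ) = γ * α
      rw [poch_succ, poch_zero]
      norm_num
    have hg1 : g 1 = α := by
      rw [hg_def]
      show ((1:ℕ):ℝ) ^ ((n:ℝ) + γ - 1) * α^1 = α
      rw [Nat.cast_one, Real.one_rpow, pow_one, one_mul]
    rw [hF1, hg1]
    have : γ < (Real.Gamma γ)⁻¹ := by
      rw [show (Real.Gamma γ)⁻¹ = 1 / Real.Gamma γ by ring, lt_div_iff₀ hΓ]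
      linarith
    exact mul_lt_mul_of_pos_right this hα0
  -- HasSum F ((1-α)^(-γ) * S)
  set S : ℝ := ∑ i ∈ Finset.range (n+1), (stirling2 n i : ℝ) * poch γ i * (α/(1-α))^i with hS_def
  have hbin : ∀ i : ℕ, HasSum (fun l : ℕ => (stirling2 n i : ℝ) * poch γ l * desc l i * α^l / (l.factorial : ℝ))
      ((1-α)^(-γ) * ((stirling2 n i : ℝ) * poch γ i * (α/(1-α))^i)) := by
    intro i
    have hai : (0:ℝ) < γ + (i:ℝ) := by positivity
    have hb := hasSum_binomial hai hα0.le hα1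
    have hC := hb.mul_left ((stirling2 n i : ℝ) * poch γ i * α^i)
    set Fi : ℕ → ℝ := fun l => (stirling2 n i : ℝ) * poch γ l * desc l i * α^l / (l.factorial : ℝ) with hFi_def
    have hinj : Function.Injective (fun m : ℕ => i + m) := fun a b h => by simpa using h
    have hzero : ∀ l : ℕ, l ∉ Set.range (fun m : ℕ => i + m) → Fi l = 0 := by
      intro l hl
      have hli : l < i := by
        by_contra h
        exact hl ⟨l - i, by simp; omega⟩
      rw [hFi_def]
      show (stirling2 n i : ℝ) * poch γ l * desc l i * α^l / (l.factorial : ℝ) = 0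
      rw [desc_eq_zero hli]
      ring
    have hcomp : (Fi ∘ fun m : ℕ => i + m)
        = fun m => ((stirling2 n i : ℝ) * poch γ i * α^i) * (bc (γ + (i:ℝ)) m * α^m) := by
      funext m
      show (stirling2 n i : ℝ) * poch γ (i+m) * desc (i+m) i * α^(i+m) / (((i+m).factorial : ℕ):ℝ) = _
      rw [poch_add, pow_add]
      rw [show (stirling2 n i : ℝ) * (poch γ i * poch (γ + (i:ℝ)) m) * desc (i+m) i * (α^i * α^m) / (((i+m).factorial : ℕ):ℝ)
          = ((stirling2 n i : ℝ) * poch γ i * α^i) * (poch (γ + (i:ℝ)) m * α^m) * (desc (i+m) i / (((i+m).factorial : ℕ):ℝ)) by ring,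
        desc_div_factorial]
      rw [bc]
      ring
    have h2 : HasSum Fi (((stirling2 n i : ℝ) * poch γ i * α^i) * (1-α)^(-(γ + (i:ℝ)))) := by
      rw [← Function.Injective.hasSum_iff hinj hzero, hcomp]
      exact hC
    have htarget : ((stirling2 n i : ℝ) * poch γ i * α^i) * (1-α)^(-(γ + (i:ℝ)))
        = (1-α)^(-γ) * ((stirling2 n i : ℝ) * poch γ i * (α/(1-α))^i) := by
      rw [show -(γ + (i:ℝ)) = (-γ) + (-(i:ℝ)) by ring, Real.rpow_add h1α,
          Real.rpow_neg h1α.le (i:ℝ), Real.rpow_natCast, div_pow]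
      field_simp
    rwa [htarget] at h2
  have hsumF : HasSum F ((1-α)^(-γ) * S) := by
    have h1 := hasSum_sum (f := fun (i : ℕ) (l : ℕ) =>
        (stirling2 n i : ℝ) * poch γ l * desc l i * α^l / (l.factorial : ℝ))
      (s := Finset.range (n+1)) (fun i _ => hbin i)
    have h2 : (fun l => ∑ i ∈ Finset.range (n+1),
        (stirling2 n i : ℝ) * poch γ l * desc l i * α^l / (l.factorial : ℝ)) = F := by
      funext l
      show ∑ i ∈ Finset.range (n+1), (stirling2 n i : ℝ) * poch γ l * desc l i * α^l / (l.factorial : ℝ)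
          = poch γ l * (l:ℝ)^n * α^l / (l.factorial : ℝ)
      rw [show poch γ l * (l:ℝ)^n * α^l / (l.factorial : ℝ)
          = (poch γ l * α^l / (l.factorial : ℝ)) * ((l:ℝ)^n) from by ring,
        stirling_sum n l, Finset.mul_sum]
      exact Finset.sum_congr rfl (fun i _ => by ring)
    have h3 : ∑ i ∈ Finset.range (n+1), (1-α)^(-γ) * ((stirling2 n i : ℝ) * poch γ i * (α/(1-α))^i)
        = (1-α)^(-γ) * S := by
      rw [hS_def, Finset.mul_sum]
    rw [h2, h3] at h1
    exact h1
  -- nonnegativity of S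
  have hSnn : 0 ≤ S := by
    rw [hS_def]
    apply Finset.sum_nonneg
    intro i _
    have := (poch_pos hγ0 i).le
    have hx : (0:ℝ) ≤ α/(1-α) := by positivity
    positivity
  -- |tcoef| = (γ^n)⁻¹ * S
  have habs : |tcoef α γ n| = (γ^n)⁻¹ * S := by
    rw [tcoef, ← hS_def]
    rw [abs_mul, abs_mul, abs_pow, abs_neg, abs_one, one_pow, one_mul,
        abs_of_nonneg (by positivity : (0:ℝ) ≤ (γ^n)⁻¹), abs_of_nonneg hSnn]
  -- strict tsum comparison
  have hsumG : Summable (fun l => (Real.Gamma γ)⁻¹ * g l) := hsumg.mul_left _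
  have htlt : ∑' l, F l < ∑' l, (Real.Gamma γ)⁻¹ * g l :=
    Summable.tsum_lt_tsum hFG hFG1 hsumF.summable hsumG
  have htF : ∑' l, F l = (1-α)^(-γ) * S := hsumF.tsum_eq
  have htG : ∑' l, (Real.Gamma γ)⁻¹ * g l = (Real.Gamma γ)⁻¹ * ∑' l, g l := tsum_mul_left
  rw [htF, htG] at htlt
  -- conclude
  refine ⟨hsumg, ?_⟩
  rw [habs]
  have hpow : (0:ℝ) < (1-α)^γ := Real.rpow_pos_of_pos h1α γ
  have hS_lt : S < (1-α)^γ * ((Real.Gamma γ)⁻¹ * ∑' l, g l) := by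
    have := mul_lt_mul_of_pos_left htlt hpow
    rwa [show (1-α)^γ * ((1-α)^(-γ) * S) = S by
      rw [← mul_assoc, ← Real.rpow_add h1α]; norm_num] at this
  have hγn : (0:ℝ) < (γ^n)⁻¹ := by positivity
  calc (γ^n)⁻¹ * S < (γ^n)⁻¹ * ((1-α)^γ * ((Real.Gamma γ)⁻¹ * ∑' l, g l)) :=
        mul_lt_mul_of_pos_left hS_lt hγn
  _ = (1 - α) ^ γ * (γ^n)⁻¹ * (Real.Gamma γ)⁻¹ * ∑' l, g l := by ring
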